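/- Let z₁(x) = 2·exp(1 − 1/(1 − (x/π)²)) − 1 for |x| < π, extended by z₁(±π) = −1 and with all one-sided derivatives z₁^{(k)}(±π) = 0 for k ≥ 1, and let ε = 1/128. Then for every k ∈ {0, 1, 2, 3, 4, 5}: (i) for every x ∈ [−π, −π + ε], z₁^{(k)}(x) lies in the closed interval with endpoints z₁^{(k)}(−π) and z₁^{(k)}(−π + ε); and (ii) for every x ∈ [π − ε, π], z₁^{(k)}(x) lies in the closed interval with endpoints z₁^{(k)}(π − ε) and z₁^{(k)}(π). -/

import Mathlib

open Real Filter Set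

/-- `z₁(x) = 2 exp(1 - 1/(1-(x/π)²)) - 1` for `|x| < π`, extended by `-1` outside;
this extension is smooth, and its (iterated) derivatives at `±π` coincide with the
one-sided derivatives, which all vanish. -/
noncomputable def z1fun (x : ℝ) : ℝ :=
  if x ^ 2 < π ^ 2 then 2 * Real.exp (1 - 1 / (1 - (x / π) ^ 2)) - 1 else -1

lemma gpos {x : ℝ} (hx : x^2 < π^2) : 0 < 1 - (x/π)^2 := by
  have h : (x/π)^2 < 1 := by
    rw [div_pow, div_lt_one (by positivity)]; exact hx
  linarith

lemma hSopen : IsOpen {x : ℝ | x^2 < π^2} :=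
  isOpen_lt (continuous_pow 2) continuous_const

lemma z1fun_eq : z1fun = fun x => 2 * Real.exp 1 * expNegInvGlue (1 - (x/π)^2) - 1 := by
  funext x
  rw [z1fun]
  rcases lt_or_ge (x^2) (π^2) with h|h
  · rw [if_pos h]
    have hg : 0 < 1 - (x/π)^2 := gpos h
    have hkey : Real.exp 1 * expNegInvGlue (1-(x/π)^2) = Real.exp (1 - 1/(1-(x/π)^2)) := by
      unfold expNegInvGlue
      rw [if_neg (not_le.2 hg), ← Real.exp_add, one_div]
      ring_nf
    rw [mul_assoc, hkey]
  · rw [if_neg (not_lt.2 h)]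
    have h1 : 1 ≤ (x/π)^2 := by
      rw [div_pow, le_div_iff₀ (by positivity)]; linarith
    rw [expNegInvGlue.zero_of_nonpos (by linarith)]
    ring

lemma z1_contDiff : ContDiff ℝ ((⊤:ℕ∞) : WithTop ℕ∞) z1fun := by
  rw [z1fun_eq]
  exact (contDiff_const.mul (expNegInvGlue.contDiff.comp
    (contDiff_const.sub ((contDiff_id.div_const π).pow 2)))).sub contDiff_const

lemma deriv_step (f h D : ℝ → ℝ) (hfh : ∀ y : ℝ, y^2 < π^2 → f y = h y)
    (hD : ∀ y : ℝ, y^2 < π^2 → HasDerivAt h (D y) y) :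
    ∀ x : ℝ, x^2 < π^2 → deriv f x = D x := by
  intro x hx
  have hev : f =ᶠ[nhds x] h := by
    filter_upwards [hSopen.mem_nhds hx] with y hy using hfh y hy
  rw [hev.deriv_eq]
  exact (hD x hx).deriv

lemma hasDeriv_base (y : ℝ) (hg : (1:ℝ) - (y/π)^2 ≠ 0) :
    HasDerivAt (fun x : ℝ => 2*Real.exp (1 - (1-(x/π)^2)⁻¹) - 1)
      (2/π^1 * (Real.exp (1 - (1-(y/π)^2)⁻¹) * (-2*(y/π)) / (1-(y/π)^2)^2)) y := by
  have hπ : (π:ℝ) ≠ 0 := pi_ne_zero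
  have hu : HasDerivAt (fun x : ℝ => x/π) (1/π) y := by
    simpa using (hasDerivAt_id y).div_const π
  have hgd : HasDerivAt (fun x : ℝ => 1-(x/π)^2) (-(2*(y/π)*(1/π))) y := by
    simpa using ((hu.pow 2).const_sub 1)
  have hE := ((hgd.inv hg).const_sub 1).exp
  have h := (hE.const_mul (2:ℝ)).sub_const 1
  refine h.congr_deriv ?_
  simp only [Pi.inv_apply, Pi.mul_apply, Pi.pow_apply, Nat.cast_ofNat]
  set u := y/π with hudef
  generalize Real.exp (1 - (1-u^2)⁻¹) = E
  field_simp

lemma hasDeriv_step1 (y : ℝ) (hg : (1:ℝ) - (y/π)^2 ≠ 0) :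
    HasDerivAt (fun x : ℝ => 2/π^1 * (Real.exp (1 - (1-(x/π)^2)⁻¹) * (-2*(x/π)) / (1-(x/π)^2)^2))
      (2/π^2 * (Real.exp (1 - (1-(y/π)^2)⁻¹) * (-2 + 6*(y/π)^4) / (1-(y/π)^2)^4)) y := by
  have hπ : (π:ℝ) ≠ 0 := pi_ne_zero
  have hu : HasDerivAt (fun x : ℝ => x/π) (1/π) y := by
    simpa using (hasDerivAt_id y).div_const π
  have hgd : HasDerivAt (fun x : ℝ => 1-(x/π)^2) (-(2*(y/π)*(1/π))) y := by
    simpa using ((hu.pow 2).const_sub 1)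
  have hE := ((hgd.inv hg).const_sub 1).exp
  have hp : HasDerivAt (fun u : ℝ => -2*u) (-2) (y/π) := by
    refine ((hasDerivAt_id (y/π)).const_mul (-2:ℝ)).congr_deriv ?_
    norm_num
    try ring
  have hR : HasDerivAt (fun x : ℝ => -2*(x/π)) ((-2)*(1/π)) y := by
    exact hp.comp y hu
  have hgm := hgd.pow 2
  have h := ((hE.mul hR).div hgm (pow_ne_zero 2 hg)).const_mul ((2:ℝ)/π^1)
  refine h.congr_deriv ?_
  simp only [Pi.inv_apply, Pi.mul_apply, Pi.pow_apply, Nat.cast_ofNat]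
  set u := y/π with hudef
  generalize Real.exp (1 - (1-u^2)⁻¹) = E
  field_simp
  ring

lemma hasDeriv_step2 (y : ℝ) (hg : (1:ℝ) - (y/π)^2 ≠ 0) :
    HasDerivAt (fun x : ℝ => 2/π^2 * (Real.exp (1 - (1-(x/π)^2)⁻¹) * (-2 + 6*(x/π)^4) / (1-(x/π)^2)^4))
      (2/π^3 * (Real.exp (1 - (1-(y/π)^2)⁻¹) * (-12*(y/π) + 40*(y/π)^3 - 12*(y/π)^5 - 24*(y/π)^7) / (1-(y/π)^2)^6)) y := by
  have hπ : (π:ℝ) ≠ 0 := pi_ne_zero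
  have hu : HasDerivAt (fun x : ℝ => x/π) (1/π) y := by
    simpa using (hasDerivAt_id y).div_const π
  have hgd : HasDerivAt (fun x : ℝ => 1-(x/π)^2) (-(2*(y/π)*(1/π))) y := by
    simpa using ((hu.pow 2).const_sub 1)
  have hE := ((hgd.inv hg).const_sub 1).exp
  have hp : HasDerivAt (fun u : ℝ => -2 + 6*u^4) (24*(y/π)^3) (y/π) := by
    refine ((hasDerivAt_const (y/π) (-2:ℝ)).add ((hasDerivAt_pow 4 (y/π)).const_mul (6:ℝ))).congr_deriv ?_
    norm_num
    try ring
  have hR : HasDerivAt (fun x : ℝ => -2 + 6*(x/π)^4) ((24*(y/π)^3)*(1/π)) y := by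
    exact (hp.comp y hu :)
  have hgm := hgd.pow 4
  have h := ((hE.mul hR).div hgm (pow_ne_zero 4 hg)).const_mul ((2:ℝ)/π^2)
  refine h.congr_deriv ?_
  simp only [Pi.inv_apply, Pi.mul_apply, Pi.pow_apply, Nat.cast_ofNat]
  set u := y/π with hudef
  generalize Real.exp (1 - (1-u^2)⁻¹) = E
  field_simp
  ring

lemma hasDeriv_step3 (y : ℝ) (hg : (1:ℝ) - (y/π)^2 ≠ 0) :
    HasDerivAt (fun x : ℝ => 2/π^3 * (Real.exp (1 - (1-(x/π)^2)⁻¹) * (-12*(x/π) + 40*(x/π)^3 - 12*(x/π)^5 - 24*(x/π)^7) / (1-(x/π)^2)^6))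
      (2/π^4 * (Real.exp (1 - (1-(y/π)^2)⁻¹) * (-12 + 24*(y/π)^2 + 232*(y/π)^4 - 528*(y/π)^6 + 180*(y/π)^8 + 120*(y/π)^10) / (1-(y/π)^2)^8)) y := by
  have hπ : (π:ℝ) ≠ 0 := pi_ne_zero
  have hu : HasDerivAt (fun x : ℝ => x/π) (1/π) y := by
    simpa using (hasDerivAt_id y).div_const π
  have hgd : HasDerivAt (fun x : ℝ => 1-(x/π)^2) (-(2*(y/π)*(1/π))) y := by
    simpa using ((hu.pow 2).const_sub 1)
  have hE := ((hgd.inv hg).const_sub 1).exp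
  have hp : HasDerivAt (fun u : ℝ => -12*u + 40*u^3 - 12*u^5 - 24*u^7) (-12 + 120*(y/π)^2 - 60*(y/π)^4 - 168*(y/π)^6) (y/π) := by
    refine (((((hasDerivAt_id (y/π)).const_mul (-12:ℝ)).add ((hasDerivAt_pow 3 (y/π)).const_mul (40:ℝ))).sub ((hasDerivAt_pow 5 (y/π)).const_mul (12:ℝ))).sub ((hasDerivAt_pow 7 (y/π)).const_mul (24:ℝ))).congr_deriv ?_
    norm_num
    try ring
  have hR : HasDerivAt (fun x : ℝ => -12*(x/π) + 40*(x/π)^3 - 12*(x/π)^5 - 24*(x/π)^7) ((-12 + 120*(y/π)^2 - 60*(y/π)^4 - 168*(y/π)^6)*(1/π)) y := by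
    exact (hp.comp y hu :)
  have hgm := hgd.pow 6
  have h := ((hE.mul hR).div hgm (pow_ne_zero 6 hg)).const_mul ((2:ℝ)/π^3)
  refine h.congr_deriv ?_
  simp only [Pi.inv_apply, Pi.mul_apply, Pi.pow_apply, Nat.cast_ofNat]
  set u := y/π with hudef
  generalize Real.exp (1 - (1-u^2)⁻¹) = E
  field_simp
  ring

lemma hasDeriv_step4 (y : ℝ) (hg : (1:ℝ) - (y/π)^2 ≠ 0) :
    HasDerivAt (fun x : ℝ => 2/π^4 * (Real.exp (1 - (1-(x/π)^2)⁻¹) * (-12 + 24*(x/π)^2 + 232*(x/π)^4 - 528*(x/π)^6 + 180*(x/π)^8 + 120*(x/π)^10) / (1-(x/π)^2)^8))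
      (2/π^5 * (Real.exp (1 - (1-(y/π)^2)⁻¹) * (-120*(y/π) + 1360*(y/π)^3 - 2112*(y/π)^5 - 2400*(y/π)^7 + 6120*(y/π)^9 - 2160*(y/π)^11 - 720*(y/π)^13) / (1-(y/π)^2)^10)) y := by
  have hπ : (π:ℝ) ≠ 0 := pi_ne_zero
  have hu : HasDerivAt (fun x : ℝ => x/π) (1/π) y := by
    simpa using (hasDerivAt_id y).div_const π
  have hgd : HasDerivAt (fun x : ℝ => 1-(x/π)^2) (-(2*(y/π)*(1/π))) y := by
    simpa using ((hu.pow 2).const_sub 1)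
  have hE := ((hgd.inv hg).const_sub 1).exp
  have hp : HasDerivAt (fun u : ℝ => -12 + 24*u^2 + 232*u^4 - 528*u^6 + 180*u^8 + 120*u^10) (48*(y/π) + 928*(y/π)^3 - 3168*(y/π)^5 + 1440*(y/π)^7 + 1200*(y/π)^9) (y/π) := by
    refine ((((((hasDerivAt_const (y/π) (-12:ℝ)).add ((hasDerivAt_pow 2 (y/π)).const_mul (24:ℝ))).add ((hasDerivAt_pow 4 (y/π)).const_mul (232:ℝ))).sub ((hasDerivAt_pow 6 (y/π)).const_mul (528:ℝ))).add ((hasDerivAt_pow 8 (y/π)).const_mul (180:ℝ))).add ((hasDerivAt_pow 10 (y/π)).const_mul (120:ℝ))).congr_deriv ?_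
    norm_num
    try ring
  have hR : HasDerivAt (fun x : ℝ => -12 + 24*(x/π)^2 + 232*(x/π)^4 - 528*(x/π)^6 + 180*(x/π)^8 + 120*(x/π)^10) ((48*(y/π) + 928*(y/π)^3 - 3168*(y/π)^5 + 1440*(y/π)^7 + 1200*(y/π)^9)*(1/π)) y := by
    exact (hp.comp y hu :)
  have hgm := hgd.pow 8
  have h := ((hE.mul hR).div hgm (pow_ne_zero 8 hg)).const_mul ((2:ℝ)/π^4)
  refine h.congr_deriv ?_
  simp only [Pi.inv_apply, Pi.mul_apply, Pi.pow_apply, Nat.cast_ofNat]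
  set u := y/π with hudef
  generalize Real.exp (1 - (1-u^2)⁻¹) = E
  field_simp
  ring

lemma hasDeriv_step5 (y : ℝ) (hg : (1:ℝ) - (y/π)^2 ≠ 0) :
    HasDerivAt (fun x : ℝ => 2/π^5 * (Real.exp (1 - (1-(x/π)^2)⁻¹) * (-120*(x/π) + 1360*(x/π)^3 - 2112*(x/π)^5 - 2400*(x/π)^7 + 6120*(x/π)^9 - 2160*(x/π)^11 - 720*(x/π)^13) / (1-(x/π)^2)^10))
      (2/π^6 * (Real.exp (1 - (1-(y/π)^2)⁻¹) * (-120 + 2160*(y/π)^2 + 8040*(y/π)^4 - 56816*(y/π)^6 + 77160*(y/π)^8 + 7440*(y/π)^10 - 68040*(y/π)^12 + 25200*(y/π)^14 + 5040*(y/π)^16) / (1-(y/π)^2)^12)) y := by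
  have hπ : (π:ℝ) ≠ 0 := pi_ne_zero
  have hu : HasDerivAt (fun x : ℝ => x/π) (1/π) y := by
    simpa using (hasDerivAt_id y).div_const π
  have hgd : HasDerivAt (fun x : ℝ => 1-(x/π)^2) (-(2*(y/π)*(1/π))) y := by
    simpa using ((hu.pow 2).const_sub 1)
  have hE := ((hgd.inv hg).const_sub 1).exp
  have hp : HasDerivAt (fun u : ℝ => -120*u + 1360*u^3 - 2112*u^5 - 2400*u^7 + 6120*u^9 - 2160*u^11 - 720*u^13) (-120 + 4080*(y/π)^2 - 10560*(y/π)^4 - 16800*(y/π)^6 + 55080*(y/π)^8 - 23760*(y/π)^10 - 9360*(y/π)^12) (y/π) := by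
    refine ((((((((hasDerivAt_id (y/π)).const_mul (-120:ℝ)).add ((hasDerivAt_pow 3 (y/π)).const_mul (1360:ℝ))).sub ((hasDerivAt_pow 5 (y/π)).const_mul (2112:ℝ))).sub ((hasDerivAt_pow 7 (y/π)).const_mul (2400:ℝ))).add ((hasDerivAt_pow 9 (y/π)).const_mul (6120:ℝ))).sub ((hasDerivAt_pow 11 (y/π)).const_mul (2160:ℝ))).sub ((hasDerivAt_pow 13 (y/π)).const_mul (720:ℝ))).congr_deriv ?_
    norm_num
    try ring
  have hR : HasDerivAt (fun x : ℝ => -120*(x/π) + 1360*(x/π)^3 - 2112*(x/π)^5 - 2400*(x/π)^7 + 6120*(x/π)^9 - 2160*(x/π)^11 - 720*(x/π)^13) ((-120 + 4080*(y/π)^2 - 10560*(y/π)^4 - 16800*(y/π)^6 + 55080*(y/π)^8 - 23760*(y/π)^10 - 9360*(y/π)^12)*(1/π)) y := by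
    exact (hp.comp y hu :)
  have hgm := hgd.pow 10
  have h := ((hE.mul hR).div hgm (pow_ne_zero 10 hg)).const_mul ((2:ℝ)/π^5)
  refine h.congr_deriv ?_
  simp only [Pi.inv_apply, Pi.mul_apply, Pi.pow_apply, Nat.cast_ofNat]
  set u := y/π with hudef
  generalize Real.exp (1 - (1-u^2)⁻¹) = E
  field_simp
  ring

lemma E1 : ∀ x : ℝ, x^2 < π^2 → iteratedDeriv 1 z1fun x = 2/π^1 * (Real.exp (1 - (1-(x/π)^2)⁻¹) * (-2*(x/π)) / (1-(x/π)^2)^2) := by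
  have := deriv_step z1fun (fun x : ℝ => 2*Real.exp (1 - (1-(x/π)^2)⁻¹) - 1)
      (fun x : ℝ => 2/π^1 * (Real.exp (1 - (1-(x/π)^2)⁻¹) * (-2*(x/π)) / (1-(x/π)^2)^2))
      (fun y hy => by rw [z1fun, if_pos hy, one_div])
      (fun y hy => hasDeriv_base y (gpos hy).ne')
  intro x hx
  rw [iteratedDeriv_one]
  exact this x hx

lemma E2 : ∀ x : ℝ, x^2 < π^2 → iteratedDeriv 2 z1fun x = 2/π^2 * (Real.exp (1 - (1-(x/π)^2)⁻¹) * (-2 + 6*(x/π)^4) / (1-(x/π)^2)^4) := by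
  have := deriv_step (iteratedDeriv 1 z1fun) (fun x : ℝ => 2/π^1 * (Real.exp (1 - (1-(x/π)^2)⁻¹) * (-2*(x/π)) / (1-(x/π)^2)^2))
      (fun x : ℝ => 2/π^2 * (Real.exp (1 - (1-(x/π)^2)⁻¹) * (-2 + 6*(x/π)^4) / (1-(x/π)^2)^4))
      E1
      (fun y hy => hasDeriv_step1 y (gpos hy).ne')
  intro x hx
  rw [iteratedDeriv_succ]
  exact this x hx

lemma E3 : ∀ x : ℝ, x^2 < π^2 → iteratedDeriv 3 z1fun x = 2/π^3 * (Real.exp (1 - (1-(x/π)^2)⁻¹) * (-12*(x/π) + 40*(x/π)^3 - 12*(x/π)^5 - 24*(x/π)^7) / (1-(x/π)^2)^6) := by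
  have := deriv_step (iteratedDeriv 2 z1fun) (fun x : ℝ => 2/π^2 * (Real.exp (1 - (1-(x/π)^2)⁻¹) * (-2 + 6*(x/π)^4) / (1-(x/π)^2)^4))
      (fun x : ℝ => 2/π^3 * (Real.exp (1 - (1-(x/π)^2)⁻¹) * (-12*(x/π) + 40*(x/π)^3 - 12*(x/π)^5 - 24*(x/π)^7) / (1-(x/π)^2)^6))
      E2
      (fun y hy => hasDeriv_step2 y (gpos hy).ne')
  intro x hx
  rw [iteratedDeriv_succ]
  exact this x hx

lemma E4 : ∀ x : ℝ, x^2 < π^2 → iteratedDeriv 4 z1fun x = 2/π^4 * (Real.exp (1 - (1-(x/π)^2)⁻¹) * (-12 + 24*(x/π)^2 + 232*(x/π)^4 - 528*(x/π)^6 + 180*(x/π)^8 + 120*(x/π)^10) / (1-(x/π)^2)^8) := by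
  have := deriv_step (iteratedDeriv 3 z1fun) (fun x : ℝ => 2/π^3 * (Real.exp (1 - (1-(x/π)^2)⁻¹) * (-12*(x/π) + 40*(x/π)^3 - 12*(x/π)^5 - 24*(x/π)^7) / (1-(x/π)^2)^6))
      (fun x : ℝ => 2/π^4 * (Real.exp (1 - (1-(x/π)^2)⁻¹) * (-12 + 24*(x/π)^2 + 232*(x/π)^4 - 528*(x/π)^6 + 180*(x/π)^8 + 120*(x/π)^10) / (1-(x/π)^2)^8))
      E3
      (fun y hy => hasDeriv_step3 y (gpos hy).ne')
  intro x hx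
  rw [iteratedDeriv_succ]
  exact this x hx

lemma E5 : ∀ x : ℝ, x^2 < π^2 → iteratedDeriv 5 z1fun x = 2/π^5 * (Real.exp (1 - (1-(x/π)^2)⁻¹) * (-120*(x/π) + 1360*(x/π)^3 - 2112*(x/π)^5 - 2400*(x/π)^7 + 6120*(x/π)^9 - 2160*(x/π)^11 - 720*(x/π)^13) / (1-(x/π)^2)^10) := by
  have := deriv_step (iteratedDeriv 4 z1fun) (fun x : ℝ => 2/π^4 * (Real.exp (1 - (1-(x/π)^2)⁻¹) * (-12 + 24*(x/π)^2 + 232*(x/π)^4 - 528*(x/π)^6 + 180*(x/π)^8 + 120*(x/π)^10) / (1-(x/π)^2)^8))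
      (fun x : ℝ => 2/π^5 * (Real.exp (1 - (1-(x/π)^2)⁻¹) * (-120*(x/π) + 1360*(x/π)^3 - 2112*(x/π)^5 - 2400*(x/π)^7 + 6120*(x/π)^9 - 2160*(x/π)^11 - 720*(x/π)^13) / (1-(x/π)^2)^10))
      E4
      (fun y hy => hasDeriv_step4 y (gpos hy).ne')
  intro x hx
  rw [iteratedDeriv_succ]
  exact this x hx

lemma E6 : ∀ x : ℝ, x^2 < π^2 → iteratedDeriv 6 z1fun x = 2/π^6 * (Real.exp (1 - (1-(x/π)^2)⁻¹) * (-120 + 2160*(x/π)^2 + 8040*(x/π)^4 - 56816*(x/π)^6 + 77160*(x/π)^8 + 7440*(x/π)^10 - 68040*(x/π)^12 + 25200*(x/π)^14 + 5040*(x/π)^16) / (1-(x/π)^2)^12) := by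
  have := deriv_step (iteratedDeriv 5 z1fun) (fun x : ℝ => 2/π^5 * (Real.exp (1 - (1-(x/π)^2)⁻¹) * (-120*(x/π) + 1360*(x/π)^3 - 2112*(x/π)^5 - 2400*(x/π)^7 + 6120*(x/π)^9 - 2160*(x/π)^11 - 720*(x/π)^13) / (1-(x/π)^2)^10))
      (fun x : ℝ => 2/π^6 * (Real.exp (1 - (1-(x/π)^2)⁻¹) * (-120 + 2160*(x/π)^2 + 8040*(x/π)^4 - 56816*(x/π)^6 + 77160*(x/π)^8 + 7440*(x/π)^10 - 68040*(x/π)^12 + 25200*(x/π)^14 + 5040*(x/π)^16) / (1-(x/π)^2)^12))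
      E5
      (fun y hy => hasDeriv_step5 y (gpos hy).ne')
  intro x hx
  rw [iteratedDeriv_succ]
  exact this x hx

lemma P1 : ∀ u : ℝ, -1 ≤ u → u ≤ -(399/400) → 0 ≤ -2*u := by
  intro u h1 h2
  have hv0 : (0:ℝ) ≤ u + 1 := by linarith
  have hv : u + 1 ≤ 1/400 := by linarith
  have e : -2*u = 2 - 2*(u+1) := by ring
  have b1 : (u+1)^1 ≤ (1/400:ℝ)^1 := pow_le_pow_left₀ hv0 hv 1
  rw [e]
  norm_num at b1 ⊢
  linarith

lemma P2 : ∀ u : ℝ, -1 ≤ u → u ≤ -(399/400) → 0 ≤ -2 + 6*u^4 := by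
  intro u h1 h2
  have hv0 : (0:ℝ) ≤ u + 1 := by linarith
  have hv : u + 1 ≤ 1/400 := by linarith
  have e : -2 + 6*u^4 = 4 - 24*(u+1) + 36*(u+1)^2 - 24*(u+1)^3 + 6*(u+1)^4 := by ring
  have b1 : (u+1)^1 ≤ (1/400:ℝ)^1 := pow_le_pow_left₀ hv0 hv 1
  have p2 : (0:ℝ) ≤ (u+1)^2 := by positivity
  have b3 : (u+1)^3 ≤ (1/400:ℝ)^3 := pow_le_pow_left₀ hv0 hv 3
  have p4 : (0:ℝ) ≤ (u+1)^4 := by positivity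
  rw [e]
  norm_num at b1 b3 ⊢
  linarith

lemma P3 : ∀ u : ℝ, -1 ≤ u → u ≤ -(399/400) → 0 ≤ -12*u + 40*u^3 - 12*u^5 - 24*u^7 := by
  intro u h1 h2
  have hv0 : (0:ℝ) ≤ u + 1 := by linarith
  have hv : u + 1 ≤ 1/400 := by linarith
  have e : -12*u + 40*u^3 - 12*u^5 - 24*u^7 = 8 - 120*(u+1) + 504*(u+1)^2 - 920*(u+1)^3 + 900*(u+1)^4 - 516*(u+1)^5 + 168*(u+1)^6 - 24*(u+1)^7 := by ring
  have b1 : (u+1)^1 ≤ (1/400:ℝ)^1 := pow_le_pow_left₀ hv0 hv 1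
  have p2 : (0:ℝ) ≤ (u+1)^2 := by positivity
  have b3 : (u+1)^3 ≤ (1/400:ℝ)^3 := pow_le_pow_left₀ hv0 hv 3
  have p4 : (0:ℝ) ≤ (u+1)^4 := by positivity
  have b5 : (u+1)^5 ≤ (1/400:ℝ)^5 := pow_le_pow_left₀ hv0 hv 5
  have p6 : (0:ℝ) ≤ (u+1)^6 := by positivity
  have b7 : (u+1)^7 ≤ (1/400:ℝ)^7 := pow_le_pow_left₀ hv0 hv 7
  rw [e]
  norm_num at b1 b3 b5 b7 ⊢
  linarith

lemma P4 : ∀ u : ℝ, -1 ≤ u → u ≤ -(399/400) → 0 ≤ -12 + 24*u^2 + 232*u^4 - 528*u^6 + 180*u^8 + 120*u^10 := by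
  intro u h1 h2
  have hv0 : (0:ℝ) ≤ u + 1 := by linarith
  have hv : u + 1 ≤ 1/400 := by linarith
  have e : -12 + 24*u^2 + 232*u^4 - 528*u^6 + 180*u^8 + 120*u^10 = 16 - 448*(u+1) + 3936*(u+1)^2 - 14848*(u+1)^3 + 30112*(u+1)^4 - 37152*(u+1)^5 + 29712*(u+1)^6 - 15840*(u+1)^7 + 5580*(u+1)^8 - 1200*(u+1)^9 + 120*(u+1)^10 := by ring
  have b1 : (u+1)^1 ≤ (1/400:ℝ)^1 := pow_le_pow_left₀ hv0 hv 1
  have p2 : (0:ℝ) ≤ (u+1)^2 := by positivity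
  have b3 : (u+1)^3 ≤ (1/400:ℝ)^3 := pow_le_pow_left₀ hv0 hv 3
  have p4 : (0:ℝ) ≤ (u+1)^4 := by positivity
  have b5 : (u+1)^5 ≤ (1/400:ℝ)^5 := pow_le_pow_left₀ hv0 hv 5
  have p6 : (0:ℝ) ≤ (u+1)^6 := by positivity
  have b7 : (u+1)^7 ≤ (1/400:ℝ)^7 := pow_le_pow_left₀ hv0 hv 7
  have p8 : (0:ℝ) ≤ (u+1)^8 := by positivity
  have b9 : (u+1)^9 ≤ (1/400:ℝ)^9 := pow_le_pow_left₀ hv0 hv 9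
  have p10 : (0:ℝ) ≤ (u+1)^10 := by positivity
  rw [e]
  norm_num at b1 b3 b5 b7 b9 ⊢
  linarith

lemma P5 : ∀ u : ℝ, -1 ≤ u → u ≤ -(399/400) → 0 ≤ -120*u + 1360*u^3 - 2112*u^5 - 2400*u^7 + 6120*u^9 - 2160*u^11 - 720*u^13 := by
  intro u h1 h2
  have hv0 : (0:ℝ) ≤ u + 1 := by linarith
  have hv : u + 1 ≤ 1/400 := by linarith
  have e : -120*u + 1360*u^3 - 2112*u^5 - 2400*u^7 + 6120*u^9 - 2160*u^11 - 720*u^13 = 32 - 1440*(u+1) + 22080*(u+1)^2 - 152000*(u+1)^3 + 551040*(u+1)^4 - 1205952*(u+1)^5 + 1736160*(u+1)^6 - 1730400*(u+1)^7 + 1227960*(u+1)^8 - 627480*(u+1)^9 + 229680*(u+1)^10 - 58320*(u+1)^11 + 9360*(u+1)^12 - 720*(u+1)^13 := by ring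
  have b1 : (u+1)^1 ≤ (1/400:ℝ)^1 := pow_le_pow_left₀ hv0 hv 1
  have p2 : (0:ℝ) ≤ (u+1)^2 := by positivity
  have b3 : (u+1)^3 ≤ (1/400:ℝ)^3 := pow_le_pow_left₀ hv0 hv 3
  have p4 : (0:ℝ) ≤ (u+1)^4 := by positivity
  have b5 : (u+1)^5 ≤ (1/400:ℝ)^5 := pow_le_pow_left₀ hv0 hv 5
  have p6 : (0:ℝ) ≤ (u+1)^6 := by positivity
  have b7 : (u+1)^7 ≤ (1/400:ℝ)^7 := pow_le_pow_left₀ hv0 hv 7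
  have p8 : (0:ℝ) ≤ (u+1)^8 := by positivity
  have b9 : (u+1)^9 ≤ (1/400:ℝ)^9 := pow_le_pow_left₀ hv0 hv 9
  have p10 : (0:ℝ) ≤ (u+1)^10 := by positivity
  have b11 : (u+1)^11 ≤ (1/400:ℝ)^11 := pow_le_pow_left₀ hv0 hv 11
  have p12 : (0:ℝ) ≤ (u+1)^12 := by positivity
  have b13 : (u+1)^13 ≤ (1/400:ℝ)^13 := pow_le_pow_left₀ hv0 hv 13
  rw [e]
  norm_num at b1 b3 b5 b7 b9 b11 b13 ⊢
  linarith

lemma P6 : ∀ u : ℝ, -1 ≤ u → u ≤ -(399/400) → 0 ≤ -120 + 2160*u^2 + 8040*u^4 - 56816*u^6 + 77160*u^8 + 7440*u^10 - 68040*u^12 + 25200*u^14 + 5040*u^16 := by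
  intro u h1 h2
  have hv0 : (0:ℝ) ≤ u + 1 := by linarith
  have hv : u + 1 ≤ 1/400 := by linarith
  have e : -120 + 2160*u^2 + 8040*u^4 - 56816*u^6 + 77160*u^8 + 7440*u^10 - 68040*u^12 + 25200*u^14 + 5040*u^16 = 64 - 4224*(u+1) + 100800*(u+1)^2 - 1136000*(u+1)^3 + 6837600*(u+1)^4 - 24432384*(u+1)^5 + 56833024*(u+1)^6 - 91766400*(u+1)^7 + 107272560*(u+1)^8 - 93213600*(u+1)^9 + 61102320*(u+1)^10 - 30371040*(u+1)^11 + 11397960*(u+1)^12 - 3175200*(u+1)^13 + 630000*(u+1)^14 - 80640*(u+1)^15 + 5040*(u+1)^16 := by ring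
  have b1 : (u+1)^1 ≤ (1/400:ℝ)^1 := pow_le_pow_left₀ hv0 hv 1
  have p2 : (0:ℝ) ≤ (u+1)^2 := by positivity
  have b3 : (u+1)^3 ≤ (1/400:ℝ)^3 := pow_le_pow_left₀ hv0 hv 3
  have p4 : (0:ℝ) ≤ (u+1)^4 := by positivity
  have b5 : (u+1)^5 ≤ (1/400:ℝ)^5 := pow_le_pow_left₀ hv0 hv 5
  have p6 : (0:ℝ) ≤ (u+1)^6 := by positivity
  have b7 : (u+1)^7 ≤ (1/400:ℝ)^7 := pow_le_pow_left₀ hv0 hv 7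
  have p8 : (0:ℝ) ≤ (u+1)^8 := by positivity
  have b9 : (u+1)^9 ≤ (1/400:ℝ)^9 := pow_le_pow_left₀ hv0 hv 9
  have p10 : (0:ℝ) ≤ (u+1)^10 := by positivity
  have b11 : (u+1)^11 ≤ (1/400:ℝ)^11 := pow_le_pow_left₀ hv0 hv 11
  have p12 : (0:ℝ) ≤ (u+1)^12 := by positivity
  have b13 : (u+1)^13 ≤ (1/400:ℝ)^13 := pow_le_pow_left₀ hv0 hv 13
  have p14 : (0:ℝ) ≤ (u+1)^14 := by positivity
  have b15 : (u+1)^15 ≤ (1/400:ℝ)^15 := pow_le_pow_left₀ hv0 hv 15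
  have p16 : (0:ℝ) ≤ (u+1)^16 := by positivity
  rw [e]
  norm_num at b1 b3 b5 b7 b9 b11 b13 b15 ⊢
  linarith

lemma pos1 : ∀ x ∈ Set.Ioo (-π) (-π+1/128), 0 ≤ iteratedDeriv 1 z1fun x := by
  intro x hx
  obtain ⟨hx1, hx2⟩ := hx
  have hπ3 : (3.141592:ℝ) < π := pi_gt_d6
  have hx2' : x^2 < π^2 := by nlinarith
  rw [E1 x hx2']
  have hgpos : 0 < 1 - (x/π)^2 := gpos hx2'
  have hu1 : -1 ≤ x/π := by
    rw [le_div_iff₀ pi_pos]; nlinarith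
  have hu2 : x/π ≤ -(399/400) := by
    rw [div_le_iff₀ pi_pos]; nlinarith
  have hR := P1 (x/π) hu1 hu2
  apply mul_nonneg (by positivity)
  exact div_nonneg (mul_nonneg (Real.exp_pos _).le hR) (by positivity)

lemma pos2 : ∀ x ∈ Set.Ioo (-π) (-π+1/128), 0 ≤ iteratedDeriv 2 z1fun x := by
  intro x hx
  obtain ⟨hx1, hx2⟩ := hx
  have hπ3 : (3.141592:ℝ) < π := pi_gt_d6
  have hx2' : x^2 < π^2 := by nlinarith
  rw [E2 x hx2']
  have hgpos : 0 < 1 - (x/π)^2 := gpos hx2'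
  have hu1 : -1 ≤ x/π := by
    rw [le_div_iff₀ pi_pos]; nlinarith
  have hu2 : x/π ≤ -(399/400) := by
    rw [div_le_iff₀ pi_pos]; nlinarith
  have hR := P2 (x/π) hu1 hu2
  apply mul_nonneg (by positivity)
  exact div_nonneg (mul_nonneg (Real.exp_pos _).le hR) (by positivity)

lemma pos3 : ∀ x ∈ Set.Ioo (-π) (-π+1/128), 0 ≤ iteratedDeriv 3 z1fun x := by
  intro x hx
  obtain ⟨hx1, hx2⟩ := hx
  have hπ3 : (3.141592:ℝ) < π := pi_gt_d6
  have hx2' : x^2 < π^2 := by nlinarith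
  rw [E3 x hx2']
  have hgpos : 0 < 1 - (x/π)^2 := gpos hx2'
  have hu1 : -1 ≤ x/π := by
    rw [le_div_iff₀ pi_pos]; nlinarith
  have hu2 : x/π ≤ -(399/400) := by
    rw [div_le_iff₀ pi_pos]; nlinarith
  have hR := P3 (x/π) hu1 hu2
  apply mul_nonneg (by positivity)
  exact div_nonneg (mul_nonneg (Real.exp_pos _).le hR) (by positivity)

lemma pos4 : ∀ x ∈ Set.Ioo (-π) (-π+1/128), 0 ≤ iteratedDeriv 4 z1fun x := by
  intro x hx
  obtain ⟨hx1, hx2⟩ := hx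
  have hπ3 : (3.141592:ℝ) < π := pi_gt_d6
  have hx2' : x^2 < π^2 := by nlinarith
  rw [E4 x hx2']
  have hgpos : 0 < 1 - (x/π)^2 := gpos hx2'
  have hu1 : -1 ≤ x/π := by
    rw [le_div_iff₀ pi_pos]; nlinarith
  have hu2 : x/π ≤ -(399/400) := by
    rw [div_le_iff₀ pi_pos]; nlinarith
  have hR := P4 (x/π) hu1 hu2
  apply mul_nonneg (by positivity)
  exact div_nonneg (mul_nonneg (Real.exp_pos _).le hR) (by positivity)

lemma pos5 : ∀ x ∈ Set.Ioo (-π) (-π+1/128), 0 ≤ iteratedDeriv 5 z1fun x := by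
  intro x hx
  obtain ⟨hx1, hx2⟩ := hx
  have hπ3 : (3.141592:ℝ) < π := pi_gt_d6
  have hx2' : x^2 < π^2 := by nlinarith
  rw [E5 x hx2']
  have hgpos : 0 < 1 - (x/π)^2 := gpos hx2'
  have hu1 : -1 ≤ x/π := by
    rw [le_div_iff₀ pi_pos]; nlinarith
  have hu2 : x/π ≤ -(399/400) := by
    rw [div_le_iff₀ pi_pos]; nlinarith
  have hR := P5 (x/π) hu1 hu2
  apply mul_nonneg (by positivity)
  exact div_nonneg (mul_nonneg (Real.exp_pos _).le hR) (by positivity)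

lemma pos6 : ∀ x ∈ Set.Ioo (-π) (-π+1/128), 0 ≤ iteratedDeriv 6 z1fun x := by
  intro x hx
  obtain ⟨hx1, hx2⟩ := hx
  have hπ3 : (3.141592:ℝ) < π := pi_gt_d6
  have hx2' : x^2 < π^2 := by nlinarith
  rw [E6 x hx2']
  have hgpos : 0 < 1 - (x/π)^2 := gpos hx2'
  have hu1 : -1 ≤ x/π := by
    rw [le_div_iff₀ pi_pos]; nlinarith
  have hu2 : x/π ≤ -(399/400) := by
    rw [div_le_iff₀ pi_pos]; nlinarith
  have hR := P6 (x/π) hu1 hu2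
  apply mul_nonneg (by positivity)
  exact div_nonneg (mul_nonneg (Real.exp_pos _).le hR) (by positivity)

lemma mul_mem_uIcc' {a b y c : ℝ} (h : y ∈ Set.uIcc a b) :
    c*y ∈ Set.uIcc (c*a) (c*b) := by
  rcases le_total 0 c with hc|hc <;> rcases Set.mem_uIcc.1 h with ⟨h1,h2⟩|⟨h1,h2⟩
  · exact Set.mem_uIcc.2 (Or.inl ⟨mul_le_mul_of_nonneg_left h1 hc, mul_le_mul_of_nonneg_left h2 hc⟩)
  · exact Set.mem_uIcc.2 (Or.inr ⟨mul_le_mul_of_nonneg_left h1 hc, mul_le_mul_of_nonneg_left h2 hc⟩)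
  · exact Set.mem_uIcc.2 (Or.inr ⟨mul_le_mul_of_nonpos_left h2 hc, mul_le_mul_of_nonpos_left h1 hc⟩)
  · exact Set.mem_uIcc.2 (Or.inl ⟨mul_le_mul_of_nonpos_left h2 hc, mul_le_mul_of_nonpos_left h1 hc⟩)

lemma z1_even (x : ℝ) : z1fun (-x) = z1fun x := by
  rw [z1fun, z1fun, show ((-x)/π)^2 = (x/π)^2 from by ring, show (-x)^2 = x^2 from by ring]

lemma mono_of_pos (k : ℕ)
    (hpos : ∀ x ∈ Set.Ioo (-π) (-π+1/128), 0 ≤ iteratedDeriv (k+1) z1fun x) :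
    ∀ x ∈ Set.Icc (-π) (-π+1/128),
      iteratedDeriv k z1fun x ∈
        Set.uIcc (iteratedDeriv k z1fun (-π)) (iteratedDeriv k z1fun (-π+1/128)) := by
  have hcont : Continuous (iteratedDeriv k z1fun) :=
    z1_contDiff.continuous_iteratedDeriv k (by exact_mod_cast le_top)
  have hdiff : Differentiable ℝ (iteratedDeriv k z1fun) :=
    z1_contDiff.differentiable_iteratedDeriv k (by exact_mod_cast WithTop.coe_lt_top k)
  have hmono : MonotoneOn (iteratedDeriv k z1fun) (Set.Icc (-π) (-π+1/128)) := by
    apply monotoneOn_of_deriv_nonneg (convex_Icc _ _) hcont.continuousOn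
      hdiff.differentiableOn
    intro x hx
    rw [interior_Icc] at hx
    rw [← iteratedDeriv_succ]
    exact hpos x hx
  intro x hx
  have hab : (-π:ℝ) ≤ -π + 1/128 := by norm_num
  have ha : (-π:ℝ) ∈ Set.Icc (-π) (-π+1/128) := Set.left_mem_Icc.2 hab
  have hb : (-π+1/128:ℝ) ∈ Set.Icc (-π) (-π+1/128) := Set.right_mem_Icc.2 hab
  rw [Set.uIcc_of_le (hmono ha hb hab)]
  exact ⟨hmono ha hx hx.1, hmono hx hb hx.2⟩

lemma right_of_left (k : ℕ)
    (hleft : ∀ x ∈ Set.Icc (-π) (-π+1/128),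
      iteratedDeriv k z1fun x ∈
        Set.uIcc (iteratedDeriv k z1fun (-π)) (iteratedDeriv k z1fun (-π+1/128))) :
    ∀ x ∈ Set.Icc (π-1/128) π,
      iteratedDeriv k z1fun x ∈
        Set.uIcc (iteratedDeriv k z1fun (π-1/128)) (iteratedDeriv k z1fun π) := by
  have hsym : ∀ x : ℝ, iteratedDeriv k z1fun x = (-1)^k * iteratedDeriv k z1fun (-x) := by
    intro x
    have h1 : z1fun = fun y => z1fun (-y) := funext fun y => (z1_even y).symm
    calc iteratedDeriv k z1fun x = iteratedDeriv k (fun y => z1fun (-y)) x := by rw [← h1]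
    _ = (-1)^k • iteratedDeriv k z1fun (-x) := iteratedDeriv_comp_neg k z1fun x
    _ = (-1)^k * iteratedDeriv k z1fun (-x) := by rw [smul_eq_mul]
  intro x hx
  have hx' : -x ∈ Set.Icc (-π) (-π+1/128) := by
    constructor
    · linarith [hx.2]
    · linarith [hx.1]
  have h := hleft (-x) hx'
  rw [hsym x, hsym (π-1/128), hsym π, show -(π-1/128) = -π+1/128 from by ring,
    show -π = -(π:ℝ) from rfl]
  rw [Set.uIcc_comm]
  exact mul_mem_uIcc' h

/-- Monotone enclosure of the derivatives of `z₁` of order `k = 0, …, 5` near the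
endpoints: on `[-π, -π + ε]` the value `z₁^{(k)}(x)` lies between `z₁^{(k)}(-π)` and
`z₁^{(k)}(-π + ε)`, and on `[π - ε, π]` it lies between `z₁^{(k)}(π - ε)` and
`z₁^{(k)}(π)`, where `ε = 1/128`. -/
theorem z1_derivatives_endpoint_enclosure :
    ∀ k : ℕ, k ≤ 5 →
      (∀ x ∈ Set.Icc (-π) (-π + 1 / 128),
        iteratedDeriv k z1fun x ∈
          Set.uIcc (iteratedDeriv k z1fun (-π)) (iteratedDeriv k z1fun (-π + 1 / 128))) ∧
      (∀ x ∈ Set.Icc (π - 1 / 128) π,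
        iteratedDeriv k z1fun x ∈
          Set.uIcc (iteratedDeriv k z1fun (π - 1 / 128)) (iteratedDeriv k z1fun π)) := by
  intro k hk
  interval_cases k
  · exact ⟨mono_of_pos 0 pos1, right_of_left 0 (mono_of_pos 0 pos1)⟩
  · exact ⟨mono_of_pos 1 pos2, right_of_left 1 (mono_of_pos 1 pos2)⟩
  · exact ⟨mono_of_pos 2 pos3, right_of_left 2 (mono_of_pos 2 pos3)⟩
  · exact ⟨mono_of_pos 3 pos4, right_of_left 3 (mono_of_pos 3 pos4)⟩
  · exact ⟨mono_of_pos 4 pos5, right_of_left 4 (mono_of_pos 4 pos5)⟩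
  · exact ⟨mono_of_pos 5 pos6, right_of_left 5 (mono_of_pos 5 pos6)⟩
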